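/- Let A be SPD, M invertible with M + Mᵀ − A SPD, P full column rank, and π_A the A-orthogonal projection onto range(P). Then ‖(I − M⁻ᵀA)(I − π_A)(I − M⁻¹A)‖_A = ‖(I − π_A)(I − M⁻¹A)‖_A² = ‖(I − M⁻ᵀA)(I − π_A)‖_A². -/

import Mathlib

open Matrix

/-- The `A`-norm of a vector, `‖v‖_A = √(vᵀ A v)`. -/
noncomputable def anorm {n : ℕ} (A : Matrix (Fin n) (Fin n) ℝ) (v : Fin n → ℝ) : ℝ :=
  Real.sqrt (v ⬝ᵥ A.mulVec v)

/-- The operator norm of a matrix `E` induced by the `A`-norm. -/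
noncomputable def opNormA {n : ℕ} (A E : Matrix (Fin n) (Fin n) ℝ) : ℝ :=
  ⨆ v : {v : Fin n → ℝ // v ≠ 0}, anorm A (E.mulVec v) / anorm A v

noncomputable def clmOf {n : ℕ} (B : Matrix (Fin n) (Fin n) ℝ) :
    EuclideanSpace ℝ (Fin n) →L[ℝ] EuclideanSpace ℝ (Fin n) :=
  LinearMap.toContinuousLinearMap (Matrix.toEuclideanLin B)

lemma clmOf_apply {n : ℕ} (B : Matrix (Fin n) (Fin n) ℝ) (v : EuclideanSpace ℝ (Fin n)) :
    clmOf B v = (WithLp.equiv 2 (Fin n → ℝ)).symm (B *ᵥ ((WithLp.equiv 2 (Fin n → ℝ)) v)) := by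
  simp [clmOf, Matrix.toEuclideanLin_apply]


lemma clmOf_mul {n : ℕ} (B C : Matrix (Fin n) (Fin n) ℝ) :
    clmOf (B * C) = (clmOf B).comp (clmOf C) := by
  ext v
  simp [clmOf_apply, ← Matrix.mulVec_mulVec]

lemma clmOf_transpose {n : ℕ} (B : Matrix (Fin n) (Fin n) ℝ) :
    clmOf Bᵀ = ContinuousLinearMap.adjoint (clmOf B) := by
  rw [clmOf, clmOf, ← Matrix.conjTranspose_eq_transpose_of_trivial,
    Matrix.toEuclideanLin_conjTranspose_eq_adjoint,
    LinearMap.adjoint_toContinuousLinearMap]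

lemma anorm_eq_norm {n : ℕ} {A S : Matrix (Fin n) (Fin n) ℝ}
    (hS : S * S = A) (hSt : Sᵀ = S) (v : Fin n → ℝ) :
    anorm A v = ‖((WithLp.equiv 2 (Fin n → ℝ)).symm (S *ᵥ v) : EuclideanSpace ℝ (Fin n))‖ := by
  have key : v ⬝ᵥ A *ᵥ v = ∑ i, ‖((WithLp.equiv 2 (Fin n → ℝ)).symm (S *ᵥ v) :
      EuclideanSpace ℝ (Fin n)) i‖ ^ 2 := by
    have h1 : A *ᵥ v = S *ᵥ (S *ᵥ v) := by rw [Matrix.mulVec_mulVec, hS]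
    have h2 : v ⬝ᵥ (S *ᵥ (S *ᵥ v)) = (S *ᵥ v) ⬝ᵥ (S *ᵥ v) := by
      rw [Matrix.dotProduct_mulVec]
      congr 1
      rw [← Matrix.mulVec_transpose, hSt]
    rw [h1, h2, dotProduct]
    refine Finset.sum_congr rfl fun i _ => ?_
    have h3 : ((WithLp.equiv 2 (Fin n → ℝ)).symm (S *ᵥ v) : EuclideanSpace ℝ (Fin n)) i
        = (S *ᵥ v) i := rfl
    rw [h3, Real.norm_eq_abs, sq_abs, sq]
  rw [EuclideanSpace.norm_eq, anorm, key]

lemma opNorm_eq_iSup {n : ℕ} (G : EuclideanSpace ℝ (Fin n) →L[ℝ] EuclideanSpace ℝ (Fin n))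
    [Nonempty {v : Fin n → ℝ // v ≠ 0}] :
    (⨆ v : {v : Fin n → ℝ // v ≠ 0},
        ‖G ((WithLp.equiv 2 (Fin n → ℝ)).symm v)‖ / ‖(WithLp.equiv 2 (Fin n → ℝ)).symm v‖)
      = ‖G‖ := by
  have hbdd : BddAbove (Set.range fun v : {v : Fin n → ℝ // v ≠ 0} =>
      ‖G ((WithLp.equiv 2 (Fin n → ℝ)).symm v)‖ / ‖(WithLp.equiv 2 (Fin n → ℝ)).symm v‖) := by
    refine ⟨‖G‖, ?_⟩
    rintro x ⟨v, rfl⟩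
    exact G.ratio_le_opNorm _
  refine le_antisymm (ciSup_le fun v => G.ratio_le_opNorm _) ?_
  have hnonneg : (0:ℝ) ≤ ⨆ v : {v : Fin n → ℝ // v ≠ 0},
      ‖G ((WithLp.equiv 2 (Fin n → ℝ)).symm v)‖ / ‖(WithLp.equiv 2 (Fin n → ℝ)).symm v‖ := by
    obtain ⟨v⟩ := (inferInstance : Nonempty {v : Fin n → ℝ // v ≠ 0})
    exact le_trans (div_nonneg (norm_nonneg _) (norm_nonneg _)) (le_ciSup hbdd v)
  refine G.opNorm_le_bound hnonneg fun x => ?_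
  by_cases hx : x = 0
  · simp [hx]
  · have hw : (WithLp.equiv 2 (Fin n → ℝ)) x ≠ 0 := by
      intro h
      apply hx
      have := congrArg (WithLp.equiv 2 (Fin n → ℝ)).symm h
      simpa using this
    have hxe : ((WithLp.equiv 2 (Fin n → ℝ)).symm ((WithLp.equiv 2 (Fin n → ℝ)) x)) = x :=
      Equiv.symm_apply_apply _ _
    have hxn : ‖x‖ ≠ 0 := norm_ne_zero_iff.mpr hx
    have h1 : ‖G x‖ / ‖x‖ ≤ ⨆ v : {v : Fin n → ℝ // v ≠ 0},
        ‖G ((WithLp.equiv 2 (Fin n → ℝ)).symm v)‖ / ‖(WithLp.equiv 2 (Fin n → ℝ)).symm v‖ := by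
      have := le_ciSup hbdd (⟨(WithLp.equiv 2 (Fin n → ℝ)) x, hw⟩ :
        {v : Fin n → ℝ // v ≠ 0})
      simpa [hxe] using this
    calc ‖G x‖ = (‖G x‖ / ‖x‖) * ‖x‖ := by field_simp
    _ ≤ _ := mul_le_mul_of_nonneg_right h1 (norm_nonneg _)

lemma opNormA_eq_norm {n : ℕ} {A S : Matrix (Fin n) (Fin n) ℝ}
    (hS : S * S = A) (hSt : Sᵀ = S) (hSd : IsUnit S.det)
    (B : Matrix (Fin n) (Fin n) ℝ) :
    opNormA A B = ‖clmOf (S * B * S⁻¹)‖ := by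
  have hker : ∀ v : Fin n → ℝ, S *ᵥ v = 0 → v = 0 := by
    intro v hv
    have : S⁻¹ *ᵥ (S *ᵥ v) = 0 := by rw [hv, Matrix.mulVec_zero]
    rwa [Matrix.mulVec_mulVec, Matrix.nonsing_inv_mul S hSd, Matrix.one_mulVec] at this
  rcases isEmpty_or_nonempty {v : Fin n → ℝ // v ≠ 0} with hE | hNE
  · have hz : ∀ v : Fin n → ℝ, v = 0 := fun v => by
      by_contra h; exact hE.false ⟨v, h⟩
    have h1 : opNormA A B = 0 := Real.iSup_of_isEmpty _
    have h2 : ‖clmOf (S * B * S⁻¹)‖ = 0 := by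
      refine le_antisymm (ContinuousLinearMap.opNorm_le_bound _ le_rfl fun x => ?_) (norm_nonneg _)
      have hx : x = 0 := by
        have h := hz ((WithLp.equiv 2 (Fin n → ℝ)) x)
        have h' := congrArg (WithLp.equiv 2 (Fin n → ℝ)).symm h
        simpa using h'
      simp [hx]
    rw [h1, h2]
  · set G := clmOf (S * B * S⁻¹) with hG
    set g : {v : Fin n → ℝ // v ≠ 0} → ℝ := fun w =>
      ‖G ((WithLp.equiv 2 (Fin n → ℝ)).symm w)‖ / ‖((WithLp.equiv 2 (Fin n → ℝ)).symm w :
        EuclideanSpace ℝ (Fin n))‖ with hg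
    let e : {v : Fin n → ℝ // v ≠ 0} → {v : Fin n → ℝ // v ≠ 0} := fun v =>
      ⟨S *ᵥ (v : Fin n → ℝ), fun h => v.2 (hker _ h)⟩
    have hsurj : Function.Surjective e := by
      intro w
      refine ⟨⟨S⁻¹ *ᵥ (w : Fin n → ℝ), fun h => w.2 ?_⟩, ?_⟩
      · have h2 : S *ᵥ (S⁻¹ *ᵥ (w : Fin n → ℝ)) = S *ᵥ 0 := by rw [h]
        rwa [Matrix.mulVec_mulVec, Matrix.mul_nonsing_inv S hSd, Matrix.one_mulVec,
          Matrix.mulVec_zero] at h2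
      · apply Subtype.ext
        show S *ᵥ (S⁻¹ *ᵥ (w : Fin n → ℝ)) = (w : Fin n → ℝ)
        rw [Matrix.mulVec_mulVec, Matrix.mul_nonsing_inv S hSd, Matrix.one_mulVec]
    have hterm : ∀ v : {v : Fin n → ℝ // v ≠ 0},
        anorm A (B *ᵥ (v : Fin n → ℝ)) / anorm A (v : Fin n → ℝ) = g (e v) := by
      intro v
      have hden : anorm A (v : Fin n → ℝ) =
          ‖((WithLp.equiv 2 (Fin n → ℝ)).symm (S *ᵥ (v : Fin n → ℝ)) :
            EuclideanSpace ℝ (Fin n))‖ := anorm_eq_norm hS hSt _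
      have hmv : (S * B * S⁻¹) *ᵥ (S *ᵥ (v : Fin n → ℝ)) = S *ᵥ (B *ᵥ (v : Fin n → ℝ)) := by
        rw [Matrix.mulVec_mulVec, Matrix.mul_assoc (S * B) S⁻¹ S,
          Matrix.nonsing_inv_mul S hSd, Matrix.mul_one, ← Matrix.mulVec_mulVec]
      have hnum : G ((WithLp.equiv 2 (Fin n → ℝ)).symm (S *ᵥ (v : Fin n → ℝ)))
          = (WithLp.equiv 2 (Fin n → ℝ)).symm (S *ᵥ (B *ᵥ (v : Fin n → ℝ))) := by
        rw [hG, clmOf_apply, Equiv.apply_symm_apply, hmv]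
      show _ = ‖G ((WithLp.equiv 2 (Fin n → ℝ)).symm (S *ᵥ (v : Fin n → ℝ)))‖ /
        ‖((WithLp.equiv 2 (Fin n → ℝ)).symm (S *ᵥ (v : Fin n → ℝ)) : EuclideanSpace ℝ (Fin n))‖
      rw [hnum, ← anorm_eq_norm hS hSt, ← hden]
    have hres : opNormA A B = ⨆ v : {v : Fin n → ℝ // v ≠ 0}, g (e v) := by
      rw [opNormA]
      exact iSup_congr hterm
    rw [hres, hsurj.iSup_comp g]
    exact opNorm_eq_iSup G

theorem two_grid_norm_identities {n nc : ℕ}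
    (A M : Matrix (Fin n) (Fin n) ℝ) (hA : A.PosDef)
    (hM : IsUnit M.det) (hMA : (M + Mᵀ - A).PosDef)
    (P : Matrix (Fin n) (Fin nc) ℝ) (hP : Function.Injective P.mulVec)
    (piA : Matrix (Fin n) (Fin n) ℝ) (hpi : piA = P * (Pᵀ * A * P)⁻¹ * Pᵀ * A) :
    opNormA A ((1 - (Mᵀ)⁻¹ * A) * (1 - piA) * (1 - M⁻¹ * A))
        = (opNormA A ((1 - piA) * (1 - M⁻¹ * A))) ^ 2 ∧
      opNormA A ((1 - (Mᵀ)⁻¹ * A) * (1 - piA) * (1 - M⁻¹ * A))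
        = (opNormA A ((1 - (Mᵀ)⁻¹ * A) * (1 - piA))) ^ 2 := by
  have hAt : Aᵀ = A := by
    have h := hA.1.eq
    rwa [Matrix.conjTranspose_eq_transpose_of_trivial] at h
  -- Pᵀ A P is positive definite
  have hPAP : (Pᵀ * A * P).PosDef := by
    refine Matrix.PosDef.of_dotProduct_mulVec_pos ?_ ?_
    · show (Pᵀ * A * P)ᴴ = Pᵀ * A * P
      rw [Matrix.conjTranspose_eq_transpose_of_trivial, Matrix.transpose_mul,
        Matrix.transpose_mul, Matrix.transpose_transpose, hAt, Matrix.mul_assoc]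
    · intro x hx
      have hx' : P *ᵥ x ≠ 0 := fun h => hx (hP (by rw [h, Matrix.mulVec_zero]))
      have h2 := hA.dotProduct_mulVec_pos hx'
      have h3 : star x ⬝ᵥ (Pᵀ * A * P) *ᵥ x = star (P *ᵥ x) ⬝ᵥ A *ᵥ (P *ᵥ x) := by
        simp only [star_trivial]
        rw [← Matrix.mulVec_mulVec, ← Matrix.mulVec_mulVec, Matrix.dotProduct_mulVec,
          Matrix.vecMul_transpose]
      rwa [h3]
  have hdet : IsUnit (Pᵀ * A * P).det := isUnit_iff_ne_zero.mpr hPAP.det_pos.ne'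
  have hdet2 : IsUnit (Pᵀ * (A * P)).det := by rwa [← Matrix.mul_assoc]
  have hPAPt : (Pᵀ * (A * P))ᵀ = Pᵀ * (A * P) := by
    simp only [Matrix.transpose_mul, Matrix.transpose_transpose, hAt, Matrix.mul_assoc]
  have hQt : ((Pᵀ * (A * P))⁻¹)ᵀ = (Pᵀ * (A * P))⁻¹ := by
    rw [Matrix.transpose_nonsing_inv, hPAPt]
  -- projection identities
  have hproj : piA * piA = piA := by
    subst hpi
    have key : ∀ Z : Matrix (Fin nc) (Fin n) ℝ, Pᵀ * (A * (P * Z)) = Pᵀ * (A * P) * Z := by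
      intro Z; simp only [Matrix.mul_assoc]
    simp only [Matrix.mul_assoc]
    rw [key, Matrix.nonsing_inv_mul_cancel_left _ _ hdet2]
  have hsymm : piAᵀ * A = A * piA := by
    subst hpi
    simp only [Matrix.transpose_mul, Matrix.transpose_transpose, hAt, hQt, Matrix.mul_assoc]
  have hM' : (M⁻¹)ᵀ = (Mᵀ)⁻¹ := Matrix.transpose_nonsing_inv M
  set E := (1 - piA) * (1 - M⁻¹ * A) with hE
  set Es := (1 - (Mᵀ)⁻¹ * A) * (1 - piA) with hEs
  have hadj : Eᵀ * A = A * Es := by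
    rw [hE, hEs]
    simp only [Matrix.transpose_mul, Matrix.transpose_sub, Matrix.transpose_one, hAt, hM',
      Matrix.sub_mul, Matrix.mul_sub, Matrix.mul_one, Matrix.one_mul, Matrix.mul_assoc, hsymm]
    abel
  have hadj' : ∀ X : Matrix (Fin n) (Fin n) ℝ, Eᵀ * (A * X) = A * (Es * X) := by
    intro X
    rw [← Matrix.mul_assoc, hadj, Matrix.mul_assoc]
  -- the square root of A
  open scoped MatrixOrder in set S := CFC.sqrt A with hSdef
  have hS : S * S = A := by
    open scoped MatrixOrder in exact CFC.sqrt_mul_sqrt_self A hA.posSemidef.nonneg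
  have hSt : Sᵀ = S := by
    have h := by open scoped MatrixOrder in exact (CFC.sqrt_nonneg A).posSemidef.1.eq
    rwa [Matrix.conjTranspose_eq_transpose_of_trivial] at h
  have hSd : IsUnit S.det := by
    refine isUnit_iff_ne_zero.mpr fun h0 => ?_
    have h : S.det * S.det = A.det := by rw [← Matrix.det_mul, hS]
    rw [h0, mul_zero] at h
    exact hA.det_pos.ne' h.symm
  have hSA : A * S⁻¹ = S := by
    rw [← hS, Matrix.mul_assoc, Matrix.mul_nonsing_inv S hSd, Matrix.mul_one]
  have hAS : S⁻¹ * A = S := by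
    rw [← hS, ← Matrix.mul_assoc, Matrix.nonsing_inv_mul S hSd, Matrix.one_mul]
  have hidem : (1 - piA) * (1 - piA) = 1 - piA := by
    simp only [Matrix.mul_sub, Matrix.sub_mul, Matrix.mul_one, Matrix.one_mul, hproj]
    abel
  have hF : Es * (1 - M⁻¹ * A) = Es * E := by
    rw [hEs, hE]
    calc (1 - (Mᵀ)⁻¹ * A) * (1 - piA) * (1 - M⁻¹ * A)
        = (1 - (Mᵀ)⁻¹ * A) * ((1 - piA) * (1 - piA)) * (1 - M⁻¹ * A) := by rw [hidem]
      _ = (1 - (Mᵀ)⁻¹ * A) * (1 - piA) * ((1 - piA) * (1 - M⁻¹ * A)) := by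
          simp only [Matrix.mul_assoc]
  have htrans : (S * E * S⁻¹)ᵀ = S * Es * S⁻¹ := by
    rw [Matrix.transpose_mul, Matrix.transpose_mul, Matrix.transpose_nonsing_inv, hSt]
    calc S⁻¹ * (Eᵀ * S)
        = S⁻¹ * (Eᵀ * (A * S⁻¹)) := by rw [hSA]
      _ = S⁻¹ * (A * (Es * S⁻¹)) := by rw [hadj']
      _ = (S⁻¹ * A) * (Es * S⁻¹) := by rw [← Matrix.mul_assoc]
      _ = S * (Es * S⁻¹) := by rw [hAS]
      _ = S * Es * S⁻¹ := by rw [← Matrix.mul_assoc]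
  have hFS : S * (Es * E) * S⁻¹ = (S * Es * S⁻¹) * (S * E * S⁻¹) := by
    simp only [Matrix.mul_assoc]
    rw [Matrix.nonsing_inv_mul_cancel_left S (E * S⁻¹) hSd]
  have hGstar : clmOf (S * Es * S⁻¹) = ContinuousLinearMap.adjoint (clmOf (S * E * S⁻¹)) := by
    rw [← htrans, clmOf_transpose]
  have hnorm : ‖ContinuousLinearMap.adjoint (clmOf (S * E * S⁻¹))‖ = ‖clmOf (S * E * S⁻¹)‖ :=
    LinearIsometryEquiv.norm_map ContinuousLinearMap.adjoint _
  have hmain : opNormA A (Es * (1 - M⁻¹ * A)) = ‖clmOf (S * E * S⁻¹)‖ ^ 2 := by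
    rw [hF, opNormA_eq_norm hS hSt hSd, hFS, clmOf_mul, hGstar,
      ContinuousLinearMap.norm_adjoint_comp_self, sq]
  constructor
  · rw [hmain, opNormA_eq_norm hS hSt hSd]
  · rw [hmain, opNormA_eq_norm hS hSt hSd, hGstar, hnorm]
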